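/- Single-valuedness identity for the coefficients A_{nm}: for every n ≥ 1, Σ_{m=0}^{n} (−1)^m A_{nm} = 1/A_{n0} (note A_{n0} = −2^{−n}(2n−1)!!/n!). For example, for n = 1: A_{10} − A_{11} = −1/2 − 3/2 = −2 = 1/A_{10}. -/

import Mathlib

open scoped Nat BigOperators

/-- The completed Riemann zeta function `2ξ(s) = s(s-1)π^{-s/2}Γ(s/2)ζ(s)`,
extended by its (entire) values `1` at `s = 0, 1`. -/
noncomputable def xi2 (s : ℂ) : ℂ :=
  if s = 0 ∨ s = 1 then 1
  else s * (s - 1) * (Real.pi : ℂ) ^ (-s / 2) * Complex.Gamma (s / 2) * riemannZeta s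

/-- The coefficients `A_{nm} = 2^{m-n} (2(n+m)-1)!! / ((2m-1)(n-m)!(2m)!)`. -/
noncomputable def A (n m : ℕ) : ℝ :=
  (2 : ℝ) ^ ((m : ℤ) - (n : ℤ)) * (Nat.doubleFactorial (2 * (n + m) - 1) : ℝ) /
    ((2 * (m : ℝ) - 1) * (Nat.factorial (n - m) : ℝ) * (Nat.factorial (2 * m) : ℝ))

/-- `Φ_m = log 2ξ(2m)`, a real number (the value `2ξ(2m)` is a positive real). -/
noncomputable def PhiVal (m : ℕ) : ℝ := (Complex.log (xi2 (2 * m))).re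

/-- The closed-form variant `Λ_n` of the Keiper sequence. -/
noncomputable def Lambda (n : ℕ) : ℝ := ∑ m ∈ Finset.Icc 1 n, (-1 : ℝ) ^ m * A n m * PhiVal m

/-! ### Auxiliary material for the proof -/

/-- Factorial form of the summand: `gA n m = (-1)^m (2n+2m)! / ((n+m)!(n-m)!(2m)!(2m-1))`. -/
noncomputable def gA (n m : ℕ) : ℝ :=
  (-1) ^ m * (Nat.factorial (2 * n + 2 * m) : ℝ) /
    ((Nat.factorial (n + m) : ℝ) * (Nat.factorial (n - m) : ℝ) *
      (Nat.factorial (2 * m) : ℝ) * (2 * (m : ℝ) - 1))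

/-- WZ certificate for the Zeilberger recurrence of `gA`. -/
noncomputable def WA (n m : ℕ) : ℝ :=
  (-2) * (4 * (n : ℝ) + 3) * (-1) ^ m * (m : ℝ) * (2 * (m : ℝ) - 1) *
      (Nat.factorial (2 * n + 2 * m) : ℝ) /
    ((2 * (n : ℝ) + 1) * ((n : ℝ) + 1) * (Nat.factorial (n + m) : ℝ) *
      (Nat.factorial (n + 1 - m) : ℝ) * (Nat.factorial (2 * m) : ℝ))

lemma twom_sub_one_ne (m : ℕ) : 2 * (m : ℝ) - 1 ≠ 0 := by
  rcases m with _ | m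
  · norm_num
  · push_cast; nlinarith [Nat.cast_nonneg (α := ℝ) m]

lemma fac_ne (k : ℕ) : ((Nat.factorial k : ℝ)) ≠ 0 := by
  exact_mod_cast (Nat.factorial_pos k).ne'

lemma wz (n m : ℕ) (h : m ≤ n) :
    (2 * (n : ℝ) + 1) * gA (n + 1) m - 8 * ((n : ℝ) + 1) * gA n m
      = WA n (m + 1) - WA n m := by
  unfold gA WA
  rw [show 2 * (n + 1) + 2 * m = (2 * n + 2 * m) + 1 + 1 by ring,
      show (n + 1) + m = (n + m) + 1 by ring,
      show (n + 1) - m = (n - m) + 1 by omega,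
      show 2 * n + 2 * (m + 1) = (2 * n + 2 * m) + 1 + 1 by ring,
      show n + (m + 1) = (n + m) + 1 by ring,
      show n + 1 - (m + 1) = n - m by omega,
      show 2 * (m + 1) = (2 * m) + 1 + 1 by ring]
  rw [Nat.factorial_succ ((2 * n + 2 * m) + 1), Nat.factorial_succ (2 * n + 2 * m),
      Nat.factorial_succ (n + m), Nat.factorial_succ (n - m),
      Nat.factorial_succ ((2 * m) + 1), Nat.factorial_succ (2 * m)]
  have hc : ((n - m : ℕ) : ℝ) = (n : ℝ) - (m : ℝ) := by
    push_cast [Nat.cast_sub h]; ring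
  push_cast [hc]
  have ha := fac_ne (2 * n + 2 * m)
  have hb := fac_ne (n + m)
  have hcf := fac_ne (n - m)
  have hd := fac_ne (2 * m)
  have h1 := twom_sub_one_ne m
  have h2 : 2 * (m : ℝ) + 1 ≠ 0 := by positivity
  have h3 : 2 * (n : ℝ) + 1 ≠ 0 := by positivity
  have h4 : (n : ℝ) + 1 ≠ 0 := by positivity
  have h5 : (n : ℝ) - (m : ℝ) + 1 ≠ 0 := by
    have : (m : ℝ) ≤ (n : ℝ) := by exact_mod_cast h
    nlinarith
  field_simp
  ring

lemma WA_zero (n : ℕ) : WA n 0 = 0 := by simp [WA]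

lemma boundary (n : ℕ) : WA n (n + 1) + (2 * (n : ℝ) + 1) * gA (n + 1) (n + 1) = 0 := by
  unfold gA WA
  rw [show 2 * n + 2 * (n + 1) = (4 * n + 2) by ring,
      show n + (n + 1) = (2 * n) + 1 by ring,
      show n + 1 - (n + 1) = 0 by omega,
      show 2 * (n + 1) + 2 * (n + 1) = (4 * n + 2) + 1 + 1 by ring,
      show (n + 1) + (n + 1) = ((2 * n) + 1) + 1 by ring,
      show 2 * (n + 1) = (2 * n) + 1 + 1 by ring]
  rw [Nat.factorial_succ ((4 * n + 2) + 1), Nat.factorial_succ (4 * n + 2),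
      Nat.factorial_succ ((2 * n) + 1)]
  push_cast
  have ha := fac_ne (4 * n + 2)
  have hb := fac_ne ((2 * n) + 1)
  have hd := fac_ne ((2 * n) + 1)
  have h2 : 2 * ((n : ℝ) + 1) - 1 ≠ 0 := by nlinarith [Nat.cast_nonneg (α := ℝ) n]
  have h3 : 2 * (n : ℝ) + 1 ≠ 0 := by positivity
  have h4 : (n : ℝ) + 1 ≠ 0 := by positivity
  rw [Nat.factorial_zero]
  field_simp
  ring

lemma sum_gA (n : ℕ) :
    ∑ m ∈ Finset.range (n + 1), gA n m
      = -(16 : ℝ) ^ n * (Nat.factorial n : ℝ) ^ 2 / (Nat.factorial (2 * n) : ℝ) := by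
  induction n with
  | zero => simp [gA]
  | succ n ih =>
    have key : (2 * (n : ℝ) + 1) * ∑ m ∈ Finset.range (n + 2), gA (n + 1) m
        = 8 * ((n : ℝ) + 1) * ∑ m ∈ Finset.range (n + 1), gA n m := by
      have tel : ∑ m ∈ Finset.range (n + 1),
          ((2 * (n : ℝ) + 1) * gA (n + 1) m - 8 * ((n : ℝ) + 1) * gA n m)
            = WA n (n + 1) - WA n 0 := by
        rw [← Finset.sum_range_sub (fun m => WA n m)]
        exact Finset.sum_congr rfl fun m hm =>
          wz n m (Nat.lt_succ_iff.mp (Finset.mem_range.mp hm))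
      rw [Finset.sum_sub_distrib, ← Finset.mul_sum, ← Finset.mul_sum, WA_zero] at tel
      rw [Finset.sum_range_succ, mul_add]
      have hb := boundary n
      linarith
    have h3 : (2 * (n : ℝ) + 1) ≠ 0 := by positivity
    have hS : ∑ m ∈ Finset.range (n + 2), gA (n + 1) m
        = 8 * ((n : ℝ) + 1) / (2 * (n : ℝ) + 1) * ∑ m ∈ Finset.range (n + 1), gA n m := by
      field_simp
      linarith
    rw [hS, ih]
    have h2n : ((2 * (n + 1)).factorial : ℝ)
        = (2 * (n : ℝ) + 2) * (2 * (n : ℝ) + 1) * ((2 * n).factorial : ℝ) := by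
      rw [show 2 * (n + 1) = (2 * n) + 1 + 1 by ring, Nat.factorial_succ, Nat.factorial_succ]
      push_cast; ring
    have hfn : ((n + 1).factorial : ℝ) = ((n : ℝ) + 1) * (n.factorial : ℝ) := by
      rw [Nat.factorial_succ]; push_cast; ring
    rw [h2n, hfn]
    have hf := fac_ne (2 * n)
    have h4 : (n : ℝ) + 1 ≠ 0 := by positivity
    have h5 : 2 * (n : ℝ) + 2 ≠ 0 := by positivity
    field_simp
    ring

lemma dfac_odd (k : ℕ) (hk : 1 ≤ k) :
    ((Nat.doubleFactorial (2 * k - 1) : ℝ)) = (Nat.factorial (2 * k) : ℝ) /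
      (2 ^ k * (Nat.factorial k : ℝ)) := by
  obtain ⟨j, rfl⟩ := Nat.exists_eq_add_of_le hk
  have h1 : 2 * (1 + j) - 1 = 2 * j + 1 := by omega
  have h2 : 2 * (1 + j) = (2 * j + 1) + 1 := by omega
  have h3 : (2 * j + 1 + 1)! = (2 * j + 1 + 1)‼ * (2 * j + 1)‼ :=
    Nat.factorial_eq_mul_doubleFactorial (2 * j + 1)
  have h4 : (2 * j + 1 + 1)‼ = 2 ^ (j + 1) * (j + 1)! := by
    rw [show 2 * j + 1 + 1 = 2 * (j + 1) by ring, Nat.doubleFactorial_two_mul]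
  have hne : (2 : ℝ) ^ (1 + j) * ((1 + j).factorial : ℝ) ≠ 0 := by
    have := fac_ne (1 + j); positivity
  rw [h1, h2, eq_div_iff hne]
  rw [show (1 : ℕ) + j = j + 1 by ring] at *
  rw [h3, h4]
  push_cast
  ring

/-- relation between `A` and `gA` for `m ≤ n`, `1 ≤ n`. -/
lemma A_eq_gA (n m : ℕ) (hn : 1 ≤ n) (hm : m ≤ n) :
    (-1 : ℝ) ^ m * A n m = gA n m / (4 : ℝ) ^ n := by
  unfold A gA
  have hk : 1 ≤ n + m := le_add_right hn
  have hd : 2 * (n + m) - 1 = 2 * (n + m) - 1 := rfl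
  rw [dfac_odd (n + m) hk]
  have h2 : (2 : ℝ) ^ ((m : ℤ) - (n : ℤ)) = 2 ^ m / 2 ^ n := by
    rw [zpow_sub₀ (two_ne_zero), zpow_natCast, zpow_natCast]
  rw [h2, show 2 * (n + m) = 2 * n + 2 * m by ring]
  have ha := fac_ne (2 * n + 2 * m)
  have hb := fac_ne (n + m)
  have hcf := fac_ne (n - m)
  have hdd := fac_ne (2 * m)
  have h1 := twom_sub_one_ne m
  have hp2 : (2 : ℝ) ^ n ≠ 0 := by positivity
  have hp2m : (2 : ℝ) ^ m ≠ 0 := by positivity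
  have hpnm : (2 : ℝ) ^ (n + m) ≠ 0 := by positivity
  have h4 : (4 : ℝ) ^ n ≠ 0 := by positivity
  field_simp
  rw [pow_add, show (4 : ℝ) = 2 * 2 by norm_num, mul_pow]
  ring

lemma A_zero (n : ℕ) (hn : 1 ≤ n) :
    A n 0 = -(Nat.factorial (2 * n) : ℝ) / ((4 : ℝ) ^ n * (Nat.factorial n : ℝ) ^ 2) := by
  unfold A
  rw [show 2 * (n + 0) - 1 = 2 * n - 1 by omega, dfac_odd n hn, Nat.sub_zero]
  have h2 : (2 : ℝ) ^ (((0 : ℕ) : ℤ) - (n : ℤ)) = 1 / 2 ^ n := by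
    rw [zpow_sub₀ (two_ne_zero), zpow_natCast]
    norm_num
  rw [h2]
  have ha := fac_ne (2 * n)
  have hb := fac_ne n
  have hp2 : (2 : ℝ) ^ n ≠ 0 := by positivity
  have h4 : (4 : ℝ) ^ n ≠ 0 := by positivity
  push_cast
  rw [show (4 : ℝ) = 2 * 2 by norm_num, mul_pow]
  field_simp
  norm_num

/-- Single-valuedness identity: `∑_{m=0}^n (-1)^m A_{nm} = 1/A_{n0}`. -/
theorem sum_alternating_A_eq_inv_A_zero (n : ℕ) (hn : 1 ≤ n) :
    ∑ m ∈ Finset.range (n + 1), (-1 : ℝ) ^ m * A n m = 1 / A n 0 := by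
  have hsum : ∑ m ∈ Finset.range (n + 1), (-1 : ℝ) ^ m * A n m
      = (∑ m ∈ Finset.range (n + 1), gA n m) / (4 : ℝ) ^ n := by
    rw [Finset.sum_div]
    exact Finset.sum_congr rfl fun m hm =>
      A_eq_gA n m hn (Nat.lt_succ_iff.mp (Finset.mem_range.mp hm))
  rw [hsum, sum_gA, A_zero n hn]
  have ha := fac_ne (2 * n)
  have hb := fac_ne n
  have h4 : (4 : ℝ) ^ n ≠ 0 := by positivity
  have ha2 : ((Nat.factorial (n * 2) : ℝ)) ≠ 0 := fac_ne (n * 2)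
  rw [show (16 : ℝ) = 4 * 4 by norm_num, mul_pow]
  field_simp
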